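/- Let x ∈ ℝ^N, let x_k be its best k-term approximation, let A be an n×N real matrix, and let y = Ax + e with ‖e‖₂ ≤ ε. Suppose there exists a real a with ak an integer, a > 1, such that the restricted isometry constants of A satisfy δ_{ak} + a·δ_{(a+1)k} < a − 1. Then any x* with ‖Ax* − y‖₂ ≤ ε and ‖x*‖₁ ≤ ‖x‖₁ satisfies ‖x* − x‖₂ ≤ C0·ε + C1·k^{−1/2}·‖x − x_k‖₁, where C0 = 2(1 + a^{−1/2})/(√(1−δ_{(a+1)k}) − a^{−1/2}·√(1+δ_{ak})) and C1 = 2a^{−1/2}(√(1−δ_{(a+1)k}) + √(1+δ_{ak}))/(√(1−δ_{(a+1)k}) − a^{−1/2}·√(1+δ_{ak})). (This is the ω = 1 specialization of the weighted ℓ1 recovery theorem, recovering the Candès–Romberg–Tao stability theorem.) -/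

import Mathlib

open scoped BigOperators

noncomputable section

/-- The ℓ1 norm of a finite real vector. -/
def l1norm {ι : Type*} [Fintype ι] (v : ι → ℝ) : ℝ := ∑ i, |v i|

/-- The Euclidean (ℓ2) norm of a finite real vector. -/
def l2norm {ι : Type*} [Fintype ι] (v : ι → ℝ) : ℝ := Real.sqrt (∑ i, (v i) ^ 2)

/-- The ℓ∞ norm of a finite real vector. -/
def linfnorm {ι : Type*} [Fintype ι] (v : ι → ℝ) : ℝ := ⨆ i, |v i|

/-- The weighted ℓ1 norm `‖v‖_{1,w} = ∑ i, w i * |v i|`. -/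
def wl1norm {ι : Type*} [Fintype ι] (w v : ι → ℝ) : ℝ := ∑ i, w i * |v i|

/-- `restrict v S` is the vector equal to `v` on `S` and zero outside `S`. -/
def restrict {ι : Type*} [DecidableEq ι] (v : ι → ℝ) (S : Finset ι) : ι → ℝ :=
  fun i => if i ∈ S then v i else 0

/-- A vector is `m`-sparse if it has at most `m` nonzero entries. -/
def IsSparse {ι : Type*} [Fintype ι] (m : ℕ) (v : ι → ℝ) : Prop :=
  (Finset.univ.filter (fun i => v i ≠ 0)).card ≤ m

/-- The restricted isometry constant `δ_m` of a matrix `A`: the smallest `δ ≥ 0` such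
that `(1-δ)‖u‖₂² ≤ ‖Au‖₂² ≤ (1+δ)‖u‖₂²` for every `m`-sparse vector `u`. -/
def ripConst {n N : ℕ} (A : Matrix (Fin n) (Fin N) ℝ) (m : ℕ) : ℝ :=
  sInf {δ : ℝ | 0 ≤ δ ∧ ∀ u : Fin N → ℝ, IsSparse m u →
    (1 - δ) * (∑ i, (u i) ^ 2) ≤ (∑ j, (A.mulVec u j) ^ 2) ∧
    (∑ j, (A.mulVec u j) ^ 2) ≤ (1 + δ) * (∑ i, (u i) ^ 2)}

end

noncomputable section

section CRTAux

theorem crt_sqrt_add_le (x y : ℝ) : Real.sqrt (x + y) ≤ Real.sqrt x + Real.sqrt y := by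
  have hx : x ≤ Real.sqrt x ^ 2 := by
    rcases le_or_gt 0 x with h | h
    · rw [Real.sq_sqrt h]
    · nlinarith [Real.sqrt_nonneg x]
  have hy : y ≤ Real.sqrt y ^ 2 := by
    rcases le_or_gt 0 y with h | h
    · rw [Real.sq_sqrt h]
    · nlinarith [Real.sqrt_nonneg y]
  have h1 : Real.sqrt (x + y) ≤ Real.sqrt ((Real.sqrt x + Real.sqrt y) ^ 2) := by
    apply Real.sqrt_le_sqrt
    nlinarith [Real.sqrt_nonneg x, Real.sqrt_nonneg y]
  calc Real.sqrt (x + y) ≤ _ := h1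
    _ = Real.sqrt x + Real.sqrt y := Real.sqrt_sq (by positivity)

theorem crt_sqrt_sum_le {κ : Type*} (s : Finset κ) (f : κ → ℝ) :
    Real.sqrt (∑ j ∈ s, f j) ≤ ∑ j ∈ s, Real.sqrt (f j) := by
  classical
  induction s using Finset.cons_induction with
  | empty => simp
  | cons j s hj ih =>
    rw [Finset.sum_cons, Finset.sum_cons]
    exact le_trans (crt_sqrt_add_le _ _) (by linarith)

theorem crt_l1_le_sqrt_card_mul {ι : Type*} (S : Finset ι) (v : ι → ℝ) :
    ∑ i ∈ S, |v i| ≤ Real.sqrt S.card * Real.sqrt (∑ i ∈ S, v i ^ 2) := by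
  have cs := Finset.sum_mul_sq_le_sq_mul_sq S (fun _ => (1:ℝ)) (fun i => |v i|)
  simp only [one_mul, one_pow, sq_abs, Finset.sum_const, nsmul_eq_mul, mul_one] at cs
  have h0 : 0 ≤ ∑ i ∈ S, |v i| := Finset.sum_nonneg fun i _ => abs_nonneg _
  calc ∑ i ∈ S, |v i| = Real.sqrt ((∑ i ∈ S, |v i|) ^ 2) := (Real.sqrt_sq h0).symm
    _ ≤ Real.sqrt ((S.card : ℝ) * ∑ i ∈ S, v i ^ 2) := Real.sqrt_le_sqrt cs
    _ = _ := Real.sqrt_mul (by positivity) _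

theorem crt_sum_mul_le {ι : Type*} (S : Finset ι) (u v : ι → ℝ) :
    ∑ i ∈ S, u i * v i ≤ Real.sqrt (∑ i ∈ S, u i ^ 2) * Real.sqrt (∑ i ∈ S, v i ^ 2) := by
  have cs := Finset.sum_mul_sq_le_sq_mul_sq S u v
  calc ∑ i ∈ S, u i * v i ≤ Real.sqrt ((∑ i ∈ S, u i * v i) ^ 2) := by
        rw [Real.sqrt_sq_eq_abs]; exact le_abs_self _
    _ ≤ Real.sqrt ((∑ i ∈ S, u i ^ 2) * ∑ i ∈ S, v i ^ 2) := Real.sqrt_le_sqrt cs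
    _ = _ := Real.sqrt_mul (by positivity) _

theorem crt_l2norm_nonneg {ι : Type*} [Fintype ι] (v : ι → ℝ) : 0 ≤ l2norm v :=
  Real.sqrt_nonneg _

theorem crt_l2norm_add_le {ι : Type*} [Fintype ι] (u v : ι → ℝ) :
    l2norm (u + v) ≤ l2norm u + l2norm v := by
  unfold l2norm
  have cs := crt_sum_mul_le Finset.univ u v
  have h1 : ∑ i, (u i + v i) ^ 2 ≤ (Real.sqrt (∑ i, u i ^ 2) + Real.sqrt (∑ i, v i ^ 2)) ^ 2 := by
    have e1 : ∑ i, (u i + v i) ^ 2 = ∑ i, u i ^ 2 + 2 * (∑ i, u i * v i) + ∑ i, v i ^ 2 := by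
      rw [Finset.mul_sum, ← Finset.sum_add_distrib, ← Finset.sum_add_distrib]
      refine Finset.sum_congr rfl fun i _ => by ring
    have h2 : (0:ℝ) ≤ ∑ i, u i ^ 2 := by positivity
    have h3 : (0:ℝ) ≤ ∑ i, v i ^ 2 := by positivity
    rw [e1]
    nlinarith [Real.sq_sqrt h2, Real.sq_sqrt h3]
  calc Real.sqrt (∑ i, (u i + v i) ^ 2) ≤ _ := Real.sqrt_le_sqrt h1
    _ = _ := Real.sqrt_sq (by positivity)

theorem crt_l2norm_neg {ι : Type*} [Fintype ι] (v : ι → ℝ) : l2norm (-v) = l2norm v := by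
  unfold l2norm
  congr 1
  exact Finset.sum_congr rfl fun i _ => by simp [neg_sq]

theorem crt_l2norm_sum_le {ι κ : Type*} [Fintype ι] (s : Finset κ) (f : κ → ι → ℝ) :
    l2norm (∑ j ∈ s, f j) ≤ ∑ j ∈ s, l2norm (f j) := by
  classical
  induction s using Finset.cons_induction with
  | empty => simp [l2norm]
  | cons j s hj ih =>
    rw [Finset.sum_cons, Finset.sum_cons]
    exact le_trans (crt_l2norm_add_le _ _) (by linarith)

theorem crt_sum_restrict_sq {ι : Type*} [Fintype ι] [DecidableEq ι] (v : ι → ℝ) (S : Finset ι) :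
    ∑ i, (restrict v S i) ^ 2 = ∑ i ∈ S, v i ^ 2 := by
  rw [← Finset.sum_subset (Finset.subset_univ S) (fun i _ hi => by simp [restrict, hi])]
  exact Finset.sum_congr rfl fun i hi => by simp [restrict, hi]

theorem crt_sparse_restrict {ι : Type*} [Fintype ι] [DecidableEq ι] (v : ι → ℝ) (S : Finset ι)
    {m : ℕ} (hS : S.card ≤ m) : IsSparse m (restrict v S) := by
  refine le_trans (Finset.card_le_card ?_) hS
  intro i hi
  have hi' : i ∈ Finset.univ.filter (fun i => restrict v S i ≠ 0) := hi
  rw [Finset.mem_filter] at hi'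
  simp only [restrict] at hi'
  show i ∈ S
  by_contra h
  exact hi'.2 (by simp [h])

theorem crt_block_l2 {ι : Type*} (Bj Bj1 : Finset ι) (h : ι → ℝ) (m : ℕ) (hm : 1 ≤ m)
    (hcard : Bj1.card ≤ m) (hdec : ∀ i ∈ Bj1, (m : ℝ) * |h i| ≤ ∑ i' ∈ Bj, |h i'|) :
    Real.sqrt (∑ i ∈ Bj1, h i ^ 2) ≤ (Real.sqrt m)⁻¹ * ∑ i' ∈ Bj, |h i'| := by
  set L := ∑ i' ∈ Bj, |h i'| with hL
  have hL0 : 0 ≤ L := Finset.sum_nonneg fun i _ => abs_nonneg _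
  have hm0 : (0:ℝ) < m := by exact_mod_cast hm
  have hterm : ∀ i ∈ Bj1, h i ^ 2 ≤ (L / m) ^ 2 := by
    intro i hi
    have h1 : |h i| ≤ L / m := by
      rw [le_div_iff₀ hm0]
      linarith [hdec i hi]
    calc h i ^ 2 = |h i| ^ 2 := (sq_abs _).symm
      _ ≤ (L / m) ^ 2 := by
        apply pow_le_pow_left₀ (abs_nonneg _) h1
  have hsum : ∑ i ∈ Bj1, h i ^ 2 ≤ (m : ℝ) * (L / m) ^ 2 := by
    calc ∑ i ∈ Bj1, h i ^ 2 ≤ ∑ _i ∈ Bj1, (L / m) ^ 2 := Finset.sum_le_sum hterm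
      _ = (Bj1.card : ℝ) * (L / m) ^ 2 := by rw [Finset.sum_const, nsmul_eq_mul]
      _ ≤ (m : ℝ) * (L / m) ^ 2 := by
          apply mul_le_mul_of_nonneg_right _ (by positivity)
          exact_mod_cast hcard
  have heq : (m : ℝ) * (L / m) ^ 2 = ((Real.sqrt m)⁻¹ * L) ^ 2 := by
    rw [mul_pow, div_pow]
    rw [inv_pow, Real.sq_sqrt hm0.le]
    field_simp
  calc Real.sqrt (∑ i ∈ Bj1, h i ^ 2) ≤ Real.sqrt (((Real.sqrt m)⁻¹ * L) ^ 2) :=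
        Real.sqrt_le_sqrt (heq ▸ hsum)
    _ = (Real.sqrt m)⁻¹ * L := Real.sqrt_sq (by positivity)

end CRTAux

theorem crt_ripConst_spec {n N : ℕ} (A : Matrix (Fin n) (Fin N) ℝ) (m : ℕ) :
    0 ≤ ripConst A m ∧ ∀ u : Fin N → ℝ, IsSparse m u →
      (1 - ripConst A m) * (∑ i, (u i) ^ 2) ≤ (∑ j, (A.mulVec u j) ^ 2) ∧
      (∑ j, (A.mulVec u j) ^ 2) ≤ (1 + ripConst A m) * (∑ i, (u i) ^ 2) := by
  set s : Set ℝ := {δ : ℝ | 0 ≤ δ ∧ ∀ u : Fin N → ℝ, IsSparse m u →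
    (1 - δ) * (∑ i, (u i) ^ 2) ≤ (∑ j, (A.mulVec u j) ^ 2) ∧
    (∑ j, (A.mulVec u j) ^ 2) ≤ (1 + δ) * (∑ i, (u i) ^ 2)} with hs
  have hmem : ripConst A m ∈ s := by
    have hclosed : IsClosed s := by
      have : s = {δ : ℝ | 0 ≤ δ} ∩ ⋂ (u : Fin N → ℝ) (_ : IsSparse m u),
          ({δ : ℝ | (1 - δ) * (∑ i, (u i) ^ 2) ≤ (∑ j, (A.mulVec u j) ^ 2)} ∩
           {δ : ℝ | (∑ j, (A.mulVec u j) ^ 2) ≤ (1 + δ) * (∑ i, (u i) ^ 2)}) := by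
        ext δ
        simp only [hs, Set.mem_setOf_eq, Set.mem_inter_iff, Set.mem_iInter]
      rw [this]
      refine IsClosed.inter (isClosed_le continuous_const continuous_id) ?_
      refine isClosed_iInter fun u => isClosed_iInter fun _ => IsClosed.inter
        (isClosed_le (by fun_prop) continuous_const)
        (isClosed_le continuous_const (by fun_prop))
    have hne : s.Nonempty := by
      refine ⟨1 + ∑ j, ∑ i, (A j i) ^ 2, ?_, fun u _ => ⟨?_, ?_⟩⟩
      · positivity
      · have h1 : (1 - (1 + ∑ j, ∑ i, (A j i) ^ 2)) ≤ 0 := by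
          have h2 : (0:ℝ) ≤ ∑ j, ∑ i, (A j i) ^ 2 := by positivity
          linarith
        calc (1 - (1 + ∑ j, ∑ i, (A j i) ^ 2)) * (∑ i, (u i) ^ 2) ≤ 0 :=
              mul_nonpos_of_nonpos_of_nonneg h1 (by positivity)
          _ ≤ _ := by positivity
      · have hrow : ∀ j, (A.mulVec u j) ^ 2 ≤ (∑ i, (A j i) ^ 2) * (∑ i, (u i) ^ 2) := by
          intro j
          have := Finset.sum_mul_sq_le_sq_mul_sq Finset.univ (fun i => A j i) u
          simpa [Matrix.mulVec, dotProduct] using this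
        calc ∑ j, (A.mulVec u j) ^ 2 ≤ ∑ j, (∑ i, (A j i) ^ 2) * (∑ i, (u i) ^ 2) :=
              Finset.sum_le_sum fun j _ => hrow j
          _ = (∑ j, ∑ i, (A j i) ^ 2) * (∑ i, (u i) ^ 2) := by rw [Finset.sum_mul]
          _ ≤ (1 + (1 + ∑ j, ∑ i, (A j i) ^ 2)) * (∑ i, (u i) ^ 2) := by
              have : (0:ℝ) ≤ ∑ i, (u i) ^ 2 := by positivity
              nlinarith
    have hbdd : BddBelow s := ⟨0, fun δ hδ => hδ.1⟩
    have : sInf s ∈ s := hclosed.csInf_mem hne hbdd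
    simpa [ripConst, hs] using this
  exact ⟨hmem.1, hmem.2⟩

theorem crt_exists_blocks {ι : Type*} [DecidableEq ι] (S : Finset ι) (h : ι → ℝ)
    (m : ℕ) (hm : 1 ≤ m) :
    ∃ (J : ℕ) (B : ℕ → Finset ι),
      (∀ j, B j ⊆ S) ∧ (∀ j, (B j).card ≤ m) ∧
      (∀ j j', j < j' → Disjoint (B j) (B j')) ∧
      (∀ i ∈ S, ∃ j, j < J ∧ i ∈ B j) ∧
      (∀ j, ∀ i ∈ B (j + 1), (m : ℝ) * |h i| ≤ ∑ i' ∈ B j, |h i'|) := by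
  classical
  set le : ι → ι → Bool := fun i i' => decide (|h i'| ≤ |h i|) with hle
  set l : List ι := S.toList.mergeSort le with hl
  have hperm : l.Perm S.toList := List.mergeSort_perm _ _
  have hnodup : l.Nodup := hperm.nodup_iff.mpr S.nodup_toList
  have hmeml : ∀ i, i ∈ l ↔ i ∈ S := fun i => hperm.mem_iff.trans (Finset.mem_toList)
  have hsorted : List.Pairwise (fun a b => |h b| ≤ |h a|) l := by
    have htr : ∀ a b c : ι, le a b = true → le b c = true → le a c = true := by
      intro a b c hab hbc
      simp only [hle, decide_eq_true_eq] at *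
      exact le_trans hbc hab
    have hto : ∀ a b : ι, (le a b || le b a) = true := by
      intro a b
      simp only [hle, Bool.or_eq_true, decide_eq_true_eq]
      exact le_total _ _
    have := List.pairwise_mergeSort htr hto S.toList
    refine this.imp ?_
    intro a b hab
    simpa [hle, decide_eq_true_eq] using hab
  set B : ℕ → Finset ι := fun j => ((l.drop (m * j)).take m).toFinset with hB
  have hBtake : ∀ j, ∀ i ∈ B j, i ∈ l.take (m * (j + 1)) := by
    intro j i hi
    rw [hB, List.mem_toFinset] at hi
    have : l.take (m * j + m) = l.take (m * j) ++ (l.drop (m * j)).take m :=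
      List.take_add (l := l) (i := m * j) (j := m)
    rw [Nat.mul_succ]
    rw [this, List.mem_append]
    exact Or.inr hi
  have hBdrop : ∀ j, ∀ i ∈ B j, i ∈ l.drop (m * j) := by
    intro j i hi
    rw [hB, List.mem_toFinset] at hi
    exact List.mem_of_mem_take hi
  have hBS : ∀ j, B j ⊆ S := by
    intro j i hi
    exact (hmeml i).mp (List.mem_of_mem_drop (hBdrop j i hi))
  have hBcard : ∀ j, (B j).card ≤ m := by
    intro j
    refine le_trans (List.toFinset_card_le _) ?_
    rw [List.length_take]
    exact min_le_left _ _
  have htake_mem : ∀ {d : ℕ} {i : ι}, i ∈ l.take d → i ∈ l.take ( d) := fun hi => hi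
  have hdisj_take_drop : ∀ d : ℕ, ∀ i : ι, i ∈ l.take d → i ∈ l.drop d → False := by
    intro d i h1 h2
    have := (List.take_append_drop d l) ▸ hnodup
    exact (List.nodup_append'.mp this).2.2 h1 h2
  have htake_mono : ∀ {d d' : ℕ}, d ≤ d' → ∀ {i : ι}, i ∈ l.take d → i ∈ l.take d' := by
    intro d d' hdd i hi
    have : l.take d = (l.take d').take d := by
      rw [List.take_take, min_eq_left hdd]
    rw [this] at hi
    exact List.mem_of_mem_take hi
  have hdisj : ∀ j j', j < j' → Disjoint (B j) (B j') := by
    intro j j' hjj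
    rw [Finset.disjoint_left]
    intro i hi hi'
    have h1 : i ∈ l.take (m * j') :=
      htake_mono (Nat.mul_le_mul_left m hjj) (hBtake j i hi)
    exact hdisj_take_drop (m * j') i h1 (hBdrop j' i hi')
  refine ⟨l.length, B, hBS, hBcard, hdisj, ?_, ?_⟩
  · -- covering
    intro i hiS
    have hil : i ∈ l := (hmeml i).mpr hiS
    obtain ⟨p, hp, hpi⟩ := List.getElem_of_mem hil
    refine ⟨p / m, lt_of_le_of_lt (Nat.div_le_self p m) hp, ?_⟩
    have hq : m * (p / m) + p % m = p := Nat.div_add_mod p m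
    have hqm : p % m < m := Nat.mod_lt _ hm
    have hdlen : p % m < (l.drop (m * (p / m))).length := by
      rw [List.length_drop]
      omega
    have hi1 : (l.drop (m * (p / m)))[p % m]'hdlen = i := by
      rw [List.getElem_drop]
      simp only [hq]
      exact hpi
    have htlen : p % m < ((l.drop (m * (p / m))).take m).length := by
      rw [List.length_take]
      exact lt_min hqm hdlen
    have hi2 : ((l.drop (m * (p / m))).take m)[p % m] = i := by
      rw [List.getElem_take]
      exact hi1
    rw [hB, List.mem_toFinset]
    exact hi2 ▸ List.getElem_mem htlen
  · -- decreasing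
    intro j i hi
    have hidrop : i ∈ l.drop (m * (j + 1)) := hBdrop (j + 1) i hi
    have hlen : m * (j + 1) < l.length := by
      by_contra hcon
      push_neg at hcon
      have : l.drop (m * (j + 1)) = [] := List.drop_eq_nil_of_le hcon
      rw [this] at hidrop
      exact List.not_mem_nil hidrop
    have hfull : (B j).card = m := by
      have hsub : ((l.drop (m * j)).take m).Sublist l :=
        (List.take_sublist _ _).trans (List.drop_sublist _ _)
      have hnd : ((l.drop (m * j)).take m).Nodup := hnodup.sublist hsub
      rw [hB]
      rw [List.card_toFinset, hnd.dedup, List.length_take, List.length_drop]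
      have : m * (j + 1) = m * j + m := Nat.mul_succ m j
      omega
    have hrel : ∀ i' ∈ B j, |h i| ≤ |h i'| := by
      intro i' hi'
      have h1 : i' ∈ l.take (m * (j + 1)) := hBtake j i' hi'
      have hp2 := (List.take_append_drop (m * (j + 1)) l) ▸ hsorted
      exact (List.pairwise_append.mp hp2).2.2 i' h1 i hidrop
    calc (m : ℝ) * |h i| = ∑ _i' ∈ B j, |h i| := by
          rw [Finset.sum_const, nsmul_eq_mul, hfull]
      _ ≤ ∑ i' ∈ B j, |h i'| := Finset.sum_le_sum fun i' hi' => hrel i' hi'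

end

set_option maxHeartbeats 1000000 in

/-- Candès–Romberg–Tao stability theorem, ω = 1 case: stable and robust
recovery of an arbitrary signal from noisy measurements via ℓ1 minimization. -/
theorem l1_recovery
    {n N : ℕ} (A : Matrix (Fin n) (Fin N) ℝ)
    (x : Fin N → ℝ) (e : Fin n → ℝ) (y : Fin n → ℝ)
    (k ak : ℕ) (a ε : ℝ)
    (T0 : Finset (Fin N)) (xk : Fin N → ℝ)
    (hk : 1 ≤ k)
    -- `xk` is the best `k`-term approximation of `x`, supported on `T0` with `|T0| = k`
    (hT0card : T0.card = k)
    (hxk : xk = restrict x T0)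
    (hbest : ∀ i ∈ T0, ∀ j ∉ T0, |x j| ≤ |x i|)
    -- `a` is a real number with `ak` an integer and `a > 1`
    (hak : (ak : ℝ) = a * k)
    (ha : 1 < a)
    -- RIP condition: `δ_{ak} + a δ_{(a+1)k} < a - 1`
    (hRIP : ripConst A ak + a * ripConst A (ak + k) < a - 1)
    -- measurements `y = Ax + e` with `‖e‖₂ ≤ ε`
    (hy : y = A.mulVec x + e)
    (he : l2norm e ≤ ε)
    -- `xs` is any solution of the ℓ1 problem
    (xs : Fin N → ℝ)
    (hfeas : l2norm (A.mulVec xs - y) ≤ ε)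
    (hopt : l1norm xs ≤ l1norm x) :
    l2norm (xs - x) ≤
      (2 * (1 + (Real.sqrt a)⁻¹) /
          (Real.sqrt (1 - ripConst A (ak + k)) -
            (Real.sqrt a)⁻¹ * Real.sqrt (1 + ripConst A ak))) * ε
      + (2 * (Real.sqrt a)⁻¹ * (Real.sqrt (1 - ripConst A (ak + k)) +
            Real.sqrt (1 + ripConst A ak)) /
          (Real.sqrt (1 - ripConst A (ak + k)) -
            (Real.sqrt a)⁻¹ * Real.sqrt (1 + ripConst A ak)))
        * (k : ℝ) ^ (-(1 / 2 : ℝ)) * l1norm (x - xk) := by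
  classical
  obtain ⟨hδ0, hδspec⟩ := crt_ripConst_spec A ak
  obtain ⟨hδ'0, hδ'spec⟩ := crt_ripConst_spec A (ak + k)
  set δ := ripConst A ak with hδdef
  set δ' := ripConst A (ak + k) with hδ'def
  set h : Fin N → ℝ := xs - x with hh
  have hk1 : (1:ℝ) ≤ (k:ℝ) := by exact_mod_cast hk
  have ha0 : (0:ℝ) < a := by linarith
  have hakR : (ak:ℝ) = a * (k:ℝ) := hak
  have hm1 : 1 ≤ ak := by
    rcases Nat.eq_zero_or_pos ak with h0 | h1
    · exfalso
      rw [h0] at hakR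
      simp only [Nat.cast_zero] at hakR
      nlinarith
    · exact h1
  have hδ'lt1 : δ' < 1 := by nlinarith
  have hb0 : (0:ℝ) ≤ 1 - δ' := by nlinarith
  set s := Real.sqrt a with hsdef
  set b := Real.sqrt (1 - δ') with hbdef
  set c := Real.sqrt (1 + δ) with hcdef
  set κ := (Real.sqrt (k:ℝ))⁻¹ with hκdef
  have hs1 : 1 < s := by
    rw [hsdef, show (1:ℝ) = Real.sqrt 1 by simp]
    exact Real.sqrt_lt_sqrt (by norm_num) ha
  have hs0 : (0:ℝ) < s := lt_trans one_pos hs1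
  have hb0' : 0 ≤ b := Real.sqrt_nonneg _
  have hc0 : 0 ≤ c := Real.sqrt_nonneg _
  have hsk0 : (0:ℝ) < Real.sqrt (k:ℝ) := Real.sqrt_pos.mpr (by linarith)
  have hκ0 : 0 < κ := by rw [hκdef]; positivity
  have hκk : κ * Real.sqrt (k:ℝ) = 1 := inv_mul_cancel₀ (ne_of_gt hsk0)
  have hD : 0 < b - s⁻¹ * c := by
    have hsq : c ^ 2 < (s * b) ^ 2 := by
      rw [mul_pow, hsdef, hbdef, hcdef, Real.sq_sqrt ha0.le, Real.sq_sqrt hb0,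
        Real.sq_sqrt (by linarith : (0:ℝ) ≤ 1 + δ)]
      nlinarith
    have h2 : c < s * b := lt_of_pow_lt_pow_left₀ 2 (by positivity) hsq
    have h3 : s⁻¹ * c < b := by
      rw [inv_mul_eq_div]
      exact (div_lt_iff₀ hs0).mpr (by nlinarith)
    linarith
  -- blocks
  obtain ⟨J, B, hBS, hBcard, hBdisj, hBcover, hBdec⟩ := crt_exists_blocks T0ᶜ h ak hm1
  set T01 := T0 ∪ B 0 with hT01def
  set t01 := Real.sqrt (∑ i ∈ T01, h i ^ 2) with ht01def
  have ht010 : 0 ≤ t01 := Real.sqrt_nonneg _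
  set ρ := l1norm (x - xk) with hρdef
  -- ℓ1 of the tail of x
  have hρ : ρ = ∑ i ∈ T0ᶜ, |x i| := by
    rw [hρdef]
    unfold l1norm
    rw [← Finset.sum_add_sum_compl T0 (fun i => |(x - xk) i|)]
    have h1 : ∑ i ∈ T0, |(x - xk) i| = 0 := by
      refine Finset.sum_eq_zero ?_
      intro i hi; simp [hxk, restrict, hi]
    have h2 : ∑ i ∈ T0ᶜ, |(x - xk) i| = ∑ i ∈ T0ᶜ, |x i| := by
      refine Finset.sum_congr rfl ?_
      intro i hi; simp [hxk, restrict, Finset.mem_compl.mp hi]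
    rw [h1, h2, zero_add]
  have hρ0 : 0 ≤ ρ := by
    rw [hρ]; exact Finset.sum_nonneg fun i _ => abs_nonneg _
  -- cone constraint
  have hcone : ∑ i ∈ T0ᶜ, |h i| ≤ ∑ i ∈ T0, |h i| + 2 * ρ := by
    have hpt1 : ∀ i ∈ T0, |x i| - |h i| ≤ |xs i| := by
      intro i _
      have : |x i| ≤ |xs i| + |h i| := by
        have e : x i = xs i - h i := by simp [hh]
        calc |x i| = |xs i - h i| := by rw [← e]
          _ = |xs i + -(h i)| := by rw [sub_eq_add_neg]
          _ ≤ |xs i| + |-(h i)| := abs_add_le _ _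
          _ = |xs i| + |h i| := by rw [abs_neg]
      linarith
    have hpt2 : ∀ i ∈ T0ᶜ, |h i| - |x i| ≤ |xs i| := by
      intro i _
      have : |h i| ≤ |xs i| + |x i| := by
        have e : h i = xs i - x i := by simp [hh]
        calc |h i| = |xs i - x i| := by rw [e]
          _ = |xs i + -(x i)| := by rw [sub_eq_add_neg]
          _ ≤ |xs i| + |-(x i)| := abs_add_le _ _
          _ = |xs i| + |x i| := by rw [abs_neg]
      linarith
    have hs1' : ∑ i ∈ T0, (|x i| - |h i|) ≤ ∑ i ∈ T0, |xs i| := Finset.sum_le_sum hpt1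
    have hs2' : ∑ i ∈ T0ᶜ, (|h i| - |x i|) ≤ ∑ i ∈ T0ᶜ, |xs i| := Finset.sum_le_sum hpt2
    rw [Finset.sum_sub_distrib] at hs1' hs2'
    have hxsplit : ∑ i ∈ T0, |x i| + ∑ i ∈ T0ᶜ, |x i| = l1norm x :=
      Finset.sum_add_sum_compl T0 _
    have hxssplit : ∑ i ∈ T0, |xs i| + ∑ i ∈ T0ᶜ, |xs i| = l1norm xs :=
      Finset.sum_add_sum_compl T0 _
    rw [hρ]
    have hopt' : l1norm xs ≤ l1norm x := hopt
    linarith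
  -- tail bound
  set tail := ∑ j ∈ Finset.range J, Real.sqrt (∑ i ∈ B (j + 1), h i ^ 2) with htaildef
  have htail0 : 0 ≤ tail :=
    Finset.sum_nonneg fun j _ => Real.sqrt_nonneg _
  have hpd : (↑(Finset.range J) : Set ℕ).PairwiseDisjoint B := by
    intro j _ j' _ hne
    rcases lt_or_gt_of_ne hne with hlt | hgt
    · exact hBdisj j j' hlt
    · exact (hBdisj j' j hgt).symm
  have htail_le : tail ≤ (Real.sqrt (ak:ℝ))⁻¹ * ∑ i ∈ T0ᶜ, |h i| := by
    have h1 : ∀ j ∈ Finset.range J,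
        Real.sqrt (∑ i ∈ B (j + 1), h i ^ 2) ≤ (Real.sqrt (ak:ℝ))⁻¹ * ∑ i ∈ B j, |h i| :=
      fun j _ => crt_block_l2 (B j) (B (j + 1)) h ak hm1 (hBcard _) (hBdec j)
    calc tail ≤ ∑ j ∈ Finset.range J, (Real.sqrt (ak:ℝ))⁻¹ * ∑ i ∈ B j, |h i| :=
          Finset.sum_le_sum h1
      _ = (Real.sqrt (ak:ℝ))⁻¹ * ∑ j ∈ Finset.range J, ∑ i ∈ B j, |h i| := by
          rw [Finset.mul_sum]
      _ ≤ (Real.sqrt (ak:ℝ))⁻¹ * ∑ i ∈ T0ᶜ, |h i| := by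
          apply mul_le_mul_of_nonneg_left _ (by positivity)
          rw [← Finset.sum_biUnion hpd]
          apply Finset.sum_le_sum_of_subset_of_nonneg
          · intro i hi
            obtain ⟨j, _, hj⟩ := Finset.mem_biUnion.mp hi
            exact hBS j hj
          · exact fun i _ _ => abs_nonneg _
  -- bound for l2 mass outside T01
  have hpd' : (↑(Finset.range J) : Set ℕ).PairwiseDisjoint (fun j => B (j + 1)) := by
    intro j _ j' _ hne
    have : j + 1 ≠ j' + 1 := by omega
    rcases lt_or_gt_of_ne this with hlt | hgt
    · exact hBdisj _ _ hlt
    · exact (hBdisj _ _ hgt).symm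
  have hcover' : T01ᶜ ⊆ (Finset.range J).biUnion (fun j => B (j + 1)) := by
    intro i hi
    rw [Finset.mem_compl, hT01def, Finset.mem_union, not_or] at hi
    obtain ⟨hiT0, hiB0⟩ := hi
    obtain ⟨j, hjJ, hjB⟩ := hBcover i (Finset.mem_compl.mpr hiT0)
    have hj0 : j ≠ 0 := fun hc => hiB0 (hc ▸ hjB)
    refine Finset.mem_biUnion.mpr ⟨j - 1, Finset.mem_range.mpr (by omega), ?_⟩
    have : j - 1 + 1 = j := by omega
    rw [this]
    exact hjB
  have htail2 : Real.sqrt (∑ i ∈ T01ᶜ, h i ^ 2) ≤ tail := by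
    have h2 : ∑ i ∈ T01ᶜ, h i ^ 2 ≤ ∑ j ∈ Finset.range J, ∑ i ∈ B (j + 1), h i ^ 2 := by
      rw [← Finset.sum_biUnion hpd']
      exact Finset.sum_le_sum_of_subset_of_nonneg hcover' (fun i _ _ => sq_nonneg _)
    exact le_trans (Real.sqrt_le_sqrt h2) (crt_sqrt_sum_le _ _)
  -- measurement error bound
  have hAh2 : l2norm (A.mulVec h) ≤ 2 * ε := by
    have hAh : A.mulVec h = (A.mulVec xs - y) + e := by
      rw [hh, hy, Matrix.mulVec_sub]
      funext j
      simp only [Pi.add_apply, Pi.sub_apply]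
      ring
    rw [hAh]
    calc l2norm ((A.mulVec xs - y) + e) ≤ l2norm (A.mulVec xs - y) + l2norm e :=
          crt_l2norm_add_le _ _
      _ ≤ ε + ε := add_le_add hfeas he
      _ = 2 * ε := by ring
  -- decomposition of h
  have hhsplit : h = restrict h T01 + restrict h T01ᶜ := by
    funext i
    by_cases hi : i ∈ T01 <;>
      simp [restrict, hi, Finset.mem_compl]
  have hdecomp : restrict h T01ᶜ = ∑ j ∈ Finset.range J, restrict h (B (j + 1)) := by
    funext i
    rw [Finset.sum_apply]
    by_cases hi : i ∈ T01ᶜ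
    · rw [Finset.mem_compl, hT01def, Finset.mem_union, not_or] at hi
      obtain ⟨hiT0, hiB0⟩ := hi
      obtain ⟨j, hjJ, hjB⟩ := hBcover i (Finset.mem_compl.mpr hiT0)
      have hj0 : j ≠ 0 := fun hc => hiB0 (hc ▸ hjB)
      have hlhs : restrict h T01ᶜ i = h i := by
        rw [restrict]
        rw [if_pos]
        rw [Finset.mem_compl, hT01def, Finset.mem_union]
        push_neg
        exact ⟨hiT0, hiB0⟩
      rw [hlhs]
      rw [Finset.sum_eq_single_of_mem (j - 1) (Finset.mem_range.mpr (by omega))]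
      · have hj1 : j - 1 + 1 = j := by omega
        rw [restrict, hj1, if_pos hjB]
      · intro j' _ hne
        rw [restrict, if_neg]
        intro hiB'
        have hne' : j' + 1 ≠ j := by omega
        rcases lt_or_gt_of_ne hne' with hlt | hgt
        · exact Finset.disjoint_left.mp (hBdisj _ _ hlt) hiB' hjB
        · exact Finset.disjoint_left.mp (hBdisj _ _ hgt) hjB hiB'
    · have hlhs : restrict h T01ᶜ i = 0 := by rw [restrict, if_neg hi]
      rw [hlhs]
      refine (Finset.sum_eq_zero ?_).symm
      intro j _
      rw [restrict, if_neg]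
      intro hiB
      apply hi
      rw [Finset.mem_compl, hT01def, Finset.mem_union]
      push_neg
      constructor
      · intro hiT0
        exact Finset.disjoint_left.mp (Finset.disjoint_left.mpr
          (fun a ha hb => (Finset.mem_compl.mp (hBS (j+1) ha)) hb)) hiB hiT0
      · intro hiB0
        exact Finset.disjoint_left.mp (hBdisj 0 (j + 1) (by omega)) hiB0 hiB
  -- RIP lower bound on T01
  have hT01card : T01.card ≤ ak + k := by
    calc T01.card ≤ T0.card + (B 0).card := Finset.card_union_le _ _
      _ ≤ k + ak := add_le_add hT0card.le (hBcard 0)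
      _ = ak + k := by omega
  have hlow : b * t01 ≤ l2norm (A.mulVec (restrict h T01)) := by
    have hr := (hδ'spec _ (crt_sparse_restrict h T01 hT01card)).1
    rw [crt_sum_restrict_sq] at hr
    unfold l2norm
    calc b * t01 = Real.sqrt ((1 - δ') * ∑ i ∈ T01, h i ^ 2) := by
          rw [Real.sqrt_mul hb0, hbdef, ht01def]
      _ ≤ _ := Real.sqrt_le_sqrt hr
  -- RIP upper bound on blocks
  have hupB : ∀ j, l2norm (A.mulVec (restrict h (B (j + 1)))) ≤
      c * Real.sqrt (∑ i ∈ B (j + 1), h i ^ 2) := by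
    intro j
    have hr := (hδspec _ (crt_sparse_restrict h (B (j + 1)) (hBcard _))).2
    rw [crt_sum_restrict_sq] at hr
    unfold l2norm
    calc Real.sqrt (∑ j', (A.mulVec (restrict h (B (j + 1))) j') ^ 2)
        ≤ Real.sqrt ((1 + δ) * ∑ i ∈ B (j + 1), h i ^ 2) := Real.sqrt_le_sqrt hr
      _ = c * Real.sqrt (∑ i ∈ B (j + 1), h i ^ 2) := by
          rw [Real.sqrt_mul (by linarith : (0:ℝ) ≤ 1 + δ), hcdef]
  -- triangle chain
  have hAT01 : l2norm (A.mulVec (restrict h T01)) ≤ 2 * ε + c * tail := by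
    set Y := ∑ j ∈ Finset.range J, A.mulVec (restrict h (B (j + 1))) with hY
    have hsum : A.mulVec h = A.mulVec (restrict h T01) + Y := by
      conv_lhs => rw [hhsplit]
      rw [Matrix.mulVec_add]
      congr 1
      rw [hdecomp, ← Matrix.mulVecLin_apply, map_sum]
      simp only [Matrix.mulVecLin_apply, hY]
    have hX : A.mulVec (restrict h T01) = A.mulVec h + -Y := by
      rw [hsum]; abel
    have hYle : l2norm Y ≤ c * tail := by
      calc l2norm Y ≤ ∑ j ∈ Finset.range J, l2norm (A.mulVec (restrict h (B (j + 1)))) :=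
            crt_l2norm_sum_le _ _
        _ ≤ ∑ j ∈ Finset.range J, c * Real.sqrt (∑ i ∈ B (j + 1), h i ^ 2) :=
            Finset.sum_le_sum fun j _ => hupB j
        _ = c * tail := by rw [htaildef, Finset.mul_sum]
    calc l2norm (A.mulVec (restrict h T01)) = l2norm (A.mulVec h + -Y) := by rw [hX]
      _ ≤ l2norm (A.mulVec h) + l2norm (-Y) := crt_l2norm_add_le _ _
      _ = l2norm (A.mulVec h) + l2norm Y := by rw [crt_l2norm_neg]
      _ ≤ 2 * ε + c * tail := add_le_add hAh2 hYle
  -- Cauchy-Schwarz on T0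
  have hT0l1 : ∑ i ∈ T0, |h i| ≤ Real.sqrt (k:ℝ) * t01 := by
    have h1 := crt_l1_le_sqrt_card_mul T0 h
    rw [hT0card] at h1
    refine le_trans h1 ?_
    apply mul_le_mul_of_nonneg_left _ (Real.sqrt_nonneg _)
    apply Real.sqrt_le_sqrt
    apply Finset.sum_le_sum_of_subset_of_nonneg (Finset.subset_union_left)
    exact fun i _ _ => sq_nonneg _
  -- convert √(ak)
  have hsqak : (Real.sqrt (ak:ℝ))⁻¹ = s⁻¹ * κ := by
    rw [hakR, Real.sqrt_mul ha0.le, mul_inv, hsdef, hκdef]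
  -- tail numeric bound
  have htail_num : tail ≤ s⁻¹ * t01 + 2 * s⁻¹ * κ * ρ := by
    have h1 : tail ≤ (Real.sqrt (ak:ℝ))⁻¹ * (∑ i ∈ T0, |h i| + 2 * ρ) := by
      refine le_trans htail_le ?_
      have hnn : (0:ℝ) ≤ (Real.sqrt (ak:ℝ))⁻¹ := by positivity
      exact mul_le_mul_of_nonneg_left hcone hnn
    rw [hsqak] at h1
    have h2 : ∑ i ∈ T0, |h i| + 2 * ρ ≤ Real.sqrt (k:ℝ) * t01 + 2 * ρ := by linarith
    have hsκnn : (0:ℝ) ≤ s⁻¹ * κ := by positivity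
    calc tail ≤ s⁻¹ * κ * (∑ i ∈ T0, |h i| + 2 * ρ) := h1
      _ ≤ s⁻¹ * κ * (Real.sqrt (k:ℝ) * t01 + 2 * ρ) := mul_le_mul_of_nonneg_left h2 hsκnn
      _ = s⁻¹ * (κ * Real.sqrt (k:ℝ)) * t01 + 2 * s⁻¹ * κ * ρ := by ring
      _ = s⁻¹ * t01 + 2 * s⁻¹ * κ * ρ := by rw [hκk, mul_one]
  -- main inequality (A)
  have hmainA : b * t01 ≤ 2 * ε + c * s⁻¹ * t01 + 2 * c * s⁻¹ * κ * ρ := by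
    have h1 := le_trans hlow hAT01
    have h2 := mul_le_mul_of_nonneg_left htail_num hc0
    have h3 : c * (s⁻¹ * t01 + 2 * s⁻¹ * κ * ρ) = c * s⁻¹ * t01 + 2 * c * s⁻¹ * κ * ρ := by
      ring
    linarith
  have hε0 : 0 ≤ ε := le_trans (crt_l2norm_nonneg e) he
  have ht01_le : t01 ≤ (2 * ε + 2 * c * s⁻¹ * κ * ρ) / (b - s⁻¹ * c) := by
    rw [le_div_iff₀ hD]
    have hexp : t01 * (b - s⁻¹ * c) = b * t01 - c * s⁻¹ * t01 := by ring
    linarith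
  -- inequality (B)
  have hnormB : l2norm h ≤ (1 + s⁻¹) * t01 + 2 * s⁻¹ * κ * ρ := by
    have h1 : l2norm h ≤ t01 + tail := by
      unfold l2norm
      rw [← Finset.sum_add_sum_compl T01 (fun i => h i ^ 2)]
      exact le_trans (crt_sqrt_add_le _ _) (add_le_add le_rfl htail2)
    calc l2norm h ≤ t01 + tail := h1
      _ ≤ t01 + (s⁻¹ * t01 + 2 * s⁻¹ * κ * ρ) := by linarith
      _ = (1 + s⁻¹) * t01 + 2 * s⁻¹ * κ * ρ := by ring
  -- final assembly
  have hκrw : (k:ℝ) ^ (-(1 / 2 : ℝ)) = κ := by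
    rw [Real.rpow_neg (by positivity), hκdef, Real.sqrt_eq_rpow]
  rw [hκrw]
  have hDne : b - s⁻¹ * c ≠ 0 := ne_of_gt hD
  have hsne : s ≠ 0 := ne_of_gt hs0
  calc l2norm h ≤ (1 + s⁻¹) * t01 + 2 * s⁻¹ * κ * ρ := hnormB
    _ ≤ (1 + s⁻¹) * ((2 * ε + 2 * c * s⁻¹ * κ * ρ) / (b - s⁻¹ * c)) + 2 * s⁻¹ * κ * ρ := by
        have hpos : (0:ℝ) ≤ 1 + s⁻¹ := by positivity
        have := mul_le_mul_of_nonneg_left ht01_le hpos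
        linarith
    _ = (2 * (1 + s⁻¹) / (b - s⁻¹ * c)) * ε
        + (2 * s⁻¹ * (b + c) / (b - s⁻¹ * c)) * κ * ρ := by
        have h5 : s * (b - s⁻¹ * c) = s * b - c := by
          field_simp
        have h4 := mul_pos hs0 hD
        rw [h5] at h4
        have h6 : s * b - c ≠ 0 := ne_of_gt h4
        have hden : b - s⁻¹ * c = (s * b - c) / s := by
          field_simp
        rw [hden]
        field_simp
        ring
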